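/- For all natural numbers a and b with b < a, there exist a natural number k with k ≤ 2·⌊log₂ a⌋ + 2 and a strictly decreasing sequence of natural numbers a = a₀ > a₁ > ... > a_k = b such that for every t with 0 ≤ t < k there is a natural number j with 2^j dividing a_t and a_{t+1} = a_t − 2^j. -/

import Mathlib

def SPath (a b k : ℕ) : Prop :=
  ∃ f : ℕ → ℕ, f 0 = a ∧ f k = b ∧ (∀ t < k, f (t + 1) < f t) ∧
    ∀ t < k, ∃ j : ℕ, 2 ^ j ∣ f t ∧ f (t + 1) = f t - 2 ^ j

lemma spath_refl (a : ℕ) : SPath a a 0 :=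
  ⟨fun _ => a, rfl, rfl, by simp, by simp⟩

lemma spath_cons {a b c k j : ℕ} (hdvd : 2 ^ j ∣ a) (hb : b = a - 2 ^ j)
    (hlt : b < a) (h : SPath b c k) : SPath a c (k + 1) := by
  obtain ⟨f, hf0, hfk, hdec, hstep⟩ := h
  refine ⟨fun t => if t = 0 then a else f (t - 1), by simp, by simp [hfk], ?_, ?_⟩
  · intro t ht
    cases t with
    | zero => simpa [hf0] using hlt
    | succ s =>
      simp only [Nat.succ_ne_zero, if_false, Nat.add_sub_cancel]
      exact hdec s (by omega)
  · intro t ht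
    cases t with
    | zero => exact ⟨j, by simpa using hdvd, by simp [hf0, hb]⟩
    | succ s =>
      simp only [Nat.succ_ne_zero, if_false, Nat.add_sub_cancel]
      exact hstep s (by omega)

lemma phase2 : ∀ d a b v : ℕ, a - b = d → b ≤ a → 2 ^ v ∣ a → a - b < 2 ^ v →
    ∃ k ≤ v, SPath a b k := by
  intro d
  induction d using Nat.strong_induction_on with
  | _ d ih =>
    intro a b v hd hba hdvd hlt
    rcases Nat.eq_zero_or_pos d with h0 | hpos
    · obtain rfl : a = b := by omega
      exact ⟨0, Nat.zero_le _, spath_refl a⟩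
    · set j := Nat.log 2 d with hj
      have h1 : 2 ^ j ≤ d := Nat.pow_log_le_self 2 (by omega)
      have h2 : d < 2 ^ (j + 1) := Nat.lt_pow_succ_log_self (by norm_num) d
      rw [pow_succ] at h2
      have hjv : j < v := by
        by_contra h
        push_neg at h
        have : 2 ^ v ≤ 2 ^ j := Nat.pow_le_pow_right (by norm_num) h
        omega
      have hdvdj : 2 ^ j ∣ a := dvd_trans (pow_dvd_pow 2 (le_of_lt hjv)) hdvd
      have hpow : 0 < 2 ^ j := pow_pos (by norm_num) _
      have hba' : b ≤ a - 2 ^ j := by omega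
      obtain ⟨k, hk, hp⟩ := ih (d - 2 ^ j) (by omega) (a - 2 ^ j) b j (by omega) hba'
        (Nat.dvd_sub hdvdj (dvd_refl _)) (by omega)
      exact ⟨k + 1, by omega, spath_cons hdvdj rfl (by omega) hp⟩

lemma phase1 : ∀ a b v : ℕ, b < a → v = a.factorization 2 →
    ∃ k ≤ (Nat.log 2 a + 1 - v) + Nat.log 2 a, SPath a b k := by
  intro a
  induction a using Nat.strong_induction_on with
  | _ a ih =>
    intro b v hba hv
    have ha : 0 < a := by omega
    have hdvd : 2 ^ v ∣ a := by rw [hv]; exact Nat.ordProj_dvd a 2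
    have hpow : 0 < 2 ^ v := pow_pos (by norm_num) _
    have hvle : v ≤ Nat.log 2 a := by
      have h2 : 2 ^ v ≤ a := Nat.le_of_dvd ha hdvd
      exact (Nat.le_log_iff_pow_le (by norm_num) (by omega)).mpr h2
    have h2va : 2 ^ v ≤ a := Nat.le_of_dvd ha hdvd
    rcases lt_trichotomy (a - 2 ^ v) b with h | h | h
    · -- direct phase 2
      obtain ⟨k, hk, hp⟩ := phase2 (a - b) a b v rfl (le_of_lt hba) hdvd (by omega)
      exact ⟨k, by omega, hp⟩
    · exact ⟨1, by omega, spath_cons hdvd h.symm (by omega) (h ▸ spath_refl _)⟩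
    · -- strip lowest bit and recurse
      set a' := a - 2 ^ v with ha'
      have ha'pos : 0 < a' := by omega
      -- 2^(v+1) ∣ a'
      have hm : a = 2 ^ v * (a / 2 ^ v) := (Nat.mul_div_cancel' hdvd).symm
      have hodd : ¬ 2 ∣ (a / 2 ^ v) := by
        rw [hv]
        exact Nat.not_dvd_ordCompl Nat.prime_two (by omega)
      have hmpos : 0 < a / 2 ^ v := Nat.div_pos h2va hpow
      have hdvd2 : 2 ∣ (a / 2 ^ v - 1) := by omega
      have hdvd' : 2 ^ (v + 1) ∣ a' := by
        have : a' = 2 ^ v * (a / 2 ^ v - 1) := by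
          rw [ha', Nat.mul_sub_one] at *
          omega
        rw [this, pow_succ]
        exact mul_dvd_mul (dvd_refl _) hdvd2
      have hv' : v + 1 ≤ a'.factorization 2 := by
        rw [← Nat.Prime.pow_dvd_iff_le_factorization Nat.prime_two (by omega)]
        exact hdvd'
      obtain ⟨k, hk, hp⟩ := ih a' (by omega) b (a'.factorization 2) h rfl
      have hlog : Nat.log 2 a' ≤ Nat.log 2 a := Nat.log_mono_right (by omega)
      have hv'le : a'.factorization 2 ≤ Nat.log 2 a' := by
        have hd' : 2 ^ (a'.factorization 2) ∣ a' := Nat.ordProj_dvd a' 2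
        have h2 : 2 ^ (a'.factorization 2) ≤ a' := Nat.le_of_dvd ha'pos hd'
        exact (Nat.le_log_iff_pow_le (by norm_num) (by omega)).mpr h2
      exact ⟨k + 1, by omega, spath_cons hdvd rfl (by omega) hp⟩

theorem shortcut_system (a b : ℕ) (hba : b < a) :
    ∃ k : ℕ, k ≤ 2 * Nat.log 2 a + 2 ∧
      ∃ f : ℕ → ℕ, f 0 = a ∧ f k = b ∧ (∀ t < k, f (t + 1) < f t) ∧
        ∀ t < k, ∃ j : ℕ, 2 ^ j ∣ f t ∧ f (t + 1) = f t - 2 ^ j := by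
  obtain ⟨k, hk, hp⟩ := phase1 a b (a.factorization 2) hba rfl
  exact ⟨k, by omega, hp⟩
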